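/- Let E and K be finite types, N ∈ ℕ, and let the data be: linear demand functions d i k (x) = (v i k / L i) · x with v i k > 0 and L i > 0; supply functions s i : ℝ → ℝ with s i (y) ≥ 0 for all y; weights w i k > 0; nonnegative turning ratios R : Fin N → E → E → K → ℝ; nonnegative exogenous inflows λ : Fin N → E → K → ℝ; a nonnegative initial condition x⁰; a step size h > 0 with h ≤ L i / v i k for all i, k; and convex cost functions φ i k : ℝ → ℝ. Then the infimum over all controls α : Fin N → E → K → ℝ with 0 ≤ α t i k ≤ 1 of the cost Σ_{t=1}^{N} Σ_{i,k} φ i k (x^α t i k), where x^α is the controlled FIFO trajectory generated by α, equals the infimum of Σ_{t=1}^{N} Σ_{i,k} φ i k (x̄ t i k) over all feasible points (x̄, z̄, f̄) of the discrete-time relaxed MC-FNC problem with the same data. -/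
import Mathlib


/-- No relaxation gap: the infimum of the convex separable cost over all
controlled FIFO trajectories generated by controls `α ∈ [0,1]` equals the
infimum of the same cost over all feasible points of the discrete-time relaxed
MC-FNC problem (linear demands `d i k (x) = (v i k / L i) * x`, nonnegative
supplies, CFL condition `h ≤ L i / v i k`). -/
theorem relaxation_no_gap
    (E K : Type*) [Fintype E] [Fintype K] (N : ℕ)
    (v : E → K → ℝ) (hv : ∀ i k, 0 < v i k)
    (L : E → ℝ) (hL : ∀ i, 0 < L i)
    (s : E → ℝ → ℝ) (hs : ∀ i y, 0 ≤ s i y)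
    (w : E → K → ℝ) (hw : ∀ i k, 0 < w i k)
    (R : Fin N → E → E → K → ℝ) (hR : ∀ t i j k, 0 ≤ R t i j k)
    (lam : Fin N → E → K → ℝ) (hlam : ∀ t i k, 0 ≤ lam t i k)
    (x0 : E → K → ℝ) (hx0 : ∀ i k, 0 ≤ x0 i k)
    (h : ℝ) (hh : 0 < h) (hCFL : ∀ i k, h ≤ L i / v i k)
    (φ : E → K → ℝ → ℝ) (hφ : ∀ i k, ConvexOn ℝ Set.univ (φ i k)) :
    sInf {c : ℝ | ∃ (α : Fin N → E → K → ℝ) (x : Fin (N + 1) → E → K → ℝ)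
        (z : Fin N → E → K → ℝ) (f : Fin N → E → E → K → ℝ)
        (γ : Fin N → E → ℝ),
      (∀ t i k, 0 ≤ α t i k ∧ α t i k ≤ 1) ∧
      x 0 = x0 ∧
      (∀ (t : Fin N) i, γ t i =
        sSup {g : ℝ | 0 ≤ g ∧ g ≤ 1 ∧ ∀ j, (∃ k, 0 < R t i j k) →
          g * (∑ k, ∑ h', R t h' j k *
              (α t h' k * ((v h' k / L h') * x t.castSucc h' k)))
            ≤ s j (∑ k, w j k * x t.castSucc j k)}) ∧
      (∀ (t : Fin N) i k,
        z t i k = γ t i * (α t i k * ((v i k / L i) * x t.castSucc i k))) ∧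
      (∀ (t : Fin N) i j k, f t i j k = R t i j k * z t i k) ∧
      (∀ (t : Fin N) i k, x t.succ i k = x t.castSucc i k +
        h * (lam t i k + (∑ j, f t j i k) - z t i k)) ∧
      c = ∑ t : Fin N, ∑ i, ∑ k, φ i k (x t.succ i k)}
    = sInf {c : ℝ | ∃ (x : Fin (N + 1) → E → K → ℝ)
        (z : Fin N → E → K → ℝ) (f : Fin N → E → E → K → ℝ),
      x 0 = x0 ∧
      (∀ (t : Fin N) i k, x t.succ i k = x t.castSucc i k +
        h * (lam t i k + (∑ j, f t j i k) - z t i k)) ∧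
      (∀ t i k, 0 ≤ x t i k) ∧
      (∀ (t : Fin N) i k,
        0 ≤ z t i k ∧ z t i k ≤ (v i k / L i) * x t.castSucc i k) ∧
      (∀ (t : Fin N) i,
        (∑ k, ∑ j, f t j i k) ≤ s i (∑ k, w i k * x t.castSucc i k)) ∧
      (∀ (t : Fin N) i j k, f t i j k = R t i j k * z t i k) ∧
      (∀ (t : Fin N) i j k, 0 ≤ f t i j k) ∧
      c = ∑ t : Fin N, ∑ i, ∑ k, φ i k (x t.succ i k)} := by
  congr 1
  ext c
  simp only [Set.mem_setOf_eq]
  constructor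
  · rintro ⟨α, x, z, f, γ, hα, hx0', hγ, hz, hf, hupd, hc⟩
    have h0mem : ∀ (t : Fin N) (i : E), (0:ℝ) ∈ {g : ℝ | 0 ≤ g ∧ g ≤ 1 ∧ ∀ j, (∃ k, 0 < R t i j k) →
          g * (∑ k, ∑ h', R t h' j k *
              (α t h' k * ((v h' k / L h') * x t.castSucc h' k)))
            ≤ s j (∑ k, w j k * x t.castSucc j k)} := by
      intro t i
      refine ⟨le_refl 0, zero_le_one, fun j _ => ?_⟩
      rw [zero_mul]; exact hs j _
    have hbdd : ∀ (t : Fin N) (i : E), BddAbove {g : ℝ | 0 ≤ g ∧ g ≤ 1 ∧ ∀ j, (∃ k, 0 < R t i j k) →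
          g * (∑ k, ∑ h', R t h' j k *
              (α t h' k * ((v h' k / L h') * x t.castSucc h' k)))
            ≤ s j (∑ k, w j k * x t.castSucc j k)} :=
      fun t i => ⟨1, fun g hg => hg.2.1⟩
    have hγ0 : ∀ (t : Fin N) (i : E), 0 ≤ γ t i := by
      intro t i
      rw [hγ t i]
      exact le_csSup (hbdd t i) (h0mem t i)
    have hγ1 : ∀ (t : Fin N) (i : E), γ t i ≤ 1 := by
      intro t i
      rw [hγ t i]
      exact csSup_le ⟨0, h0mem t i⟩ (fun g hg => hg.2.1)
    have hxpos : ∀ (t : Fin (N+1)) (i : E) (k : K), 0 ≤ x t i k := by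
      intro t
      induction t using Fin.induction with
      | zero => intro i k; rw [hx0']; exact hx0 i k
      | succ t ih =>
        intro i k
        rw [hupd t i k]
        have hd : 0 ≤ (v i k / L i) * x t.castSucc i k :=
          mul_nonneg (div_nonneg (hv i k).le (hL i).le) (ih i k)
        have hz0 : 0 ≤ z t i k := by
          rw [hz t i k]
          exact mul_nonneg (hγ0 t i) (mul_nonneg (hα t i k).1 hd)
        have hzle : z t i k ≤ (v i k / L i) * x t.castSucc i k := by
          rw [hz t i k]
          nlinarith [hγ0 t i, hγ1 t i, (hα t i k).1, (hα t i k).2,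
            mul_nonneg (sub_nonneg.mpr (hγ1 t i)) (mul_nonneg (hα t i k).1 hd),
            mul_nonneg (sub_nonneg.mpr (hα t i k).2) hd]
        have hF : 0 ≤ ∑ j, f t j i k := by
          refine Finset.sum_nonneg fun j _ => ?_
          rw [hf t j i k, hz t j k]
          exact mul_nonneg (hR t j i k) (mul_nonneg (hγ0 t j) (mul_nonneg (hα t j k).1
            (mul_nonneg (div_nonneg (hv j k).le (hL j).le) (ih j k))))
        have hhv : h * v i k ≤ L i := (le_div_iff₀ (hv i k)).mp (hCFL i k)
        have hcfl : h * (v i k / L i) ≤ 1 := by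
          rw [← mul_div_assoc]
          exact (div_le_one (hL i)).mpr hhv
        nlinarith [mul_le_mul_of_nonneg_left hzle hh.le,
          mul_le_mul_of_nonneg_right hcfl (ih i k),
          mul_nonneg hh.le hF, mul_nonneg hh.le (hlam t i k)]
    have hγsat : ∀ (t : Fin N) (i j : E), (∃ k, 0 < R t i j k) →
        γ t i * (∑ k, ∑ h', R t h' j k *
              (α t h' k * ((v h' k / L h') * x t.castSucc h' k)))
          ≤ s j (∑ k, w j k * x t.castSucc j k) := by
      intro t i j hjk
      have hA : 0 ≤ ∑ k, ∑ h', R t h' j k *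
          (α t h' k * ((v h' k / L h') * x t.castSucc h' k)) :=
        Finset.sum_nonneg fun k _ => Finset.sum_nonneg fun h' _ =>
          mul_nonneg (hR _ _ _ _) (mul_nonneg (hα _ _ _).1
            (mul_nonneg (div_nonneg (hv _ _).le (hL _).le) (hxpos _ _ _)))
      rcases hA.eq_or_lt with hA0 | hApos
      · rw [← hA0, mul_zero]; exact hs j _
      · rw [hγ t i, ← le_div_iff₀ hApos]
        refine csSup_le ⟨0, h0mem t i⟩ ?_
        intro g hg
        exact (le_div_iff₀ hApos).mpr (hg.2.2 j hjk)
    refine ⟨x, z, f, hx0', hupd, hxpos, ?_, ?_, hf, ?_, hc⟩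
    · intro t i k
      have hd : 0 ≤ (v i k / L i) * x t.castSucc i k :=
        mul_nonneg (div_nonneg (hv i k).le (hL i).le) (hxpos _ i k)
      constructor
      · rw [hz t i k]
        exact mul_nonneg (hγ0 t i) (mul_nonneg (hα t i k).1 hd)
      · rw [hz t i k]
        nlinarith [hγ0 t i, hγ1 t i, (hα t i k).1, (hα t i k).2,
          mul_nonneg (sub_nonneg.mpr (hγ1 t i)) (mul_nonneg (hα t i k).1 hd),
          mul_nonneg (sub_nonneg.mpr (hα t i k).2) hd]
    · intro t i
      have hDpos : ∀ (j : E) (k : K), 0 ≤ α t j k * ((v j k / L j) * x t.castSucc j k) :=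
        fun j k => mul_nonneg (hα t j k).1
          (mul_nonneg (div_nonneg (hv j k).le (hL j).le) (hxpos _ j k))
      have hcpos : ∀ j : E, 0 ≤ ∑ k, R t j i k *
          (α t j k * ((v j k / L j) * x t.castSucc j k)) :=
        fun j => Finset.sum_nonneg fun k _ => mul_nonneg (hR _ _ _ _) (hDpos j k)
      have hAc : (∑ k, ∑ h', R t h' i k *
            (α t h' k * ((v h' k / L h') * x t.castSucc h' k)))
          = ∑ j, ∑ k, R t j i k * (α t j k * ((v j k / L j) * x t.castSucc j k)) :=
        Finset.sum_comm
      have hA0 : 0 ≤ ∑ k, ∑ h', R t h' i k *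
          (α t h' k * ((v h' k / L h') * x t.castSucc h' k)) := by
        rw [hAc]; exact Finset.sum_nonneg fun j _ => hcpos j
      have hrw : (∑ k, ∑ j, f t j i k)
          = ∑ j, γ t j * ∑ k, R t j i k * (α t j k * ((v j k / L j) * x t.castSucc j k)) := by
        rw [Finset.sum_comm]
        refine Finset.sum_congr rfl fun j _ => ?_
        rw [Finset.mul_sum]
        refine Finset.sum_congr rfl fun k _ => ?_
        rw [hf t j i k, hz t j k]; ring
      rw [hrw]
      rcases hA0.eq_or_lt with hAz | hApos
      · have hall : ∀ j ∈ Finset.univ, (∑ k, R t j i k *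
            (α t j k * ((v j k / L j) * x t.castSucc j k))) = 0 := by
          rw [← Finset.sum_eq_zero_iff_of_nonneg (fun j _ => hcpos j), ← hAc, ← hAz]
        rw [Finset.sum_eq_zero fun j hj => by rw [hall j hj, mul_zero]]
        exact hs i _
      · have hterm : ∀ j ∈ Finset.univ,
            γ t j * (∑ k, R t j i k * (α t j k * ((v j k / L j) * x t.castSucc j k)))
            ≤ (s i (∑ k, w i k * x t.castSucc i k) /
                (∑ k, ∑ h', R t h' i k * (α t h' k * ((v h' k / L h') * x t.castSucc h' k))))
              * (∑ k, R t j i k * (α t j k * ((v j k / L j) * x t.castSucc j k))) := by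
          intro j _
          rcases (hcpos j).eq_or_lt with hc0 | hcp
          · rw [← hc0, mul_zero, mul_zero]
          · have hcp' : (∑ _k : K, (0:ℝ)) < ∑ k, R t j i k *
                (α t j k * ((v j k / L j) * x t.castSucc j k)) := by simpa using hcp
            obtain ⟨k, -, hk⟩ := Finset.exists_lt_of_sum_lt hcp'
            have hex : ∃ k, 0 < R t j i k := by
              refine ⟨k, lt_of_le_of_ne (hR t j i k) fun hE => ?_⟩
              rw [← hE, zero_mul] at hk
              exact lt_irrefl 0 hk
            have hγA := hγsat t j i hex
            have hγle : γ t j ≤ s i (∑ k, w i k * x t.castSucc i k) /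
                (∑ k, ∑ h', R t h' i k * (α t h' k * ((v h' k / L h') * x t.castSucc h' k))) :=
              (le_div_iff₀ hApos).mpr hγA
            exact mul_le_mul_of_nonneg_right hγle (hcpos j)
        calc ∑ j, γ t j * (∑ k, R t j i k * (α t j k * ((v j k / L j) * x t.castSucc j k)))
            ≤ ∑ j, (s i (∑ k, w i k * x t.castSucc i k) /
                (∑ k, ∑ h', R t h' i k * (α t h' k * ((v h' k / L h') * x t.castSucc h' k))))
              * (∑ k, R t j i k * (α t j k * ((v j k / L j) * x t.castSucc j k))) :=
              Finset.sum_le_sum hterm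
          _ = (s i (∑ k, w i k * x t.castSucc i k) /
                (∑ k, ∑ h', R t h' i k * (α t h' k * ((v h' k / L h') * x t.castSucc h' k))))
              * (∑ k, ∑ h', R t h' i k * (α t h' k * ((v h' k / L h') * x t.castSucc h' k))) := by
              rw [← Finset.mul_sum, ← hAc]
          _ = s i (∑ k, w i k * x t.castSucc i k) := div_mul_cancel₀ _ hApos.ne'
    · intro t i j k
      rw [hf t i j k, hz t i k]
      exact mul_nonneg (hR t i j k) (mul_nonneg (hγ0 t i) (mul_nonneg (hα t i k).1
        (mul_nonneg (div_nonneg (hv i k).le (hL i).le) (hxpos _ i k))))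
  · rintro ⟨x, z, f, hx0', hupd, hxpos, hzb, hsup, hf, hfpos, hc⟩
    classical
    set α : Fin N → E → K → ℝ := fun t i k =>
      if 0 < x t.castSucc i k then z t i k * (L i / (v i k * x t.castSucc i k)) else 0
      with hαdef
    have hkey : ∀ (t : Fin N) (i : E) (k : K),
        α t i k * ((v i k / L i) * x t.castSucc i k) = z t i k := by
      intro t i k
      by_cases hx : 0 < x t.castSucc i k
      · simp only [hαdef, if_pos hx]
        have hv' := (hv i k).ne'
        have hL' := (hL i).ne'
        have hx' := hx.ne'
        field_simp
      · have hxe : x t.castSucc i k = 0 := le_antisymm (not_lt.mp hx) (hxpos _ i k)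
        have hze : z t i k = 0 := by
          have h2 := (hzb t i k).2
          rw [hxe, mul_zero] at h2
          exact le_antisymm h2 (hzb t i k).1
        simp [hαdef, if_neg hx, hxe, hze]
    have hαb : ∀ (t : Fin N) (i : E) (k : K), 0 ≤ α t i k ∧ α t i k ≤ 1 := by
      intro t i k
      by_cases hx : 0 < x t.castSucc i k
      · simp only [hαdef, if_pos hx]
        constructor
        · exact mul_nonneg (hzb t i k).1 (div_nonneg (hL i).le
            (mul_nonneg (hv i k).le (hxpos _ i k)))
        · rw [← mul_div_assoc, div_le_one (mul_pos (hv i k) hx)]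
          have h2 := (hzb t i k).2
          rw [div_mul_eq_mul_div, le_div_iff₀ (hL i)] at h2
          linarith
      · simp only [hαdef, if_neg hx]
        exact ⟨le_refl 0, zero_le_one⟩
    refine ⟨α, x, z, f, fun _ _ => (1:ℝ), hαb, hx0', ?_, ?_, hf, hupd, hc⟩
    · intro t i
      have h1mem : (1:ℝ) ∈ {g : ℝ | 0 ≤ g ∧ g ≤ 1 ∧ ∀ j, (∃ k, 0 < R t i j k) →
          g * (∑ k, ∑ h', R t h' j k *
              (α t h' k * ((v h' k / L h') * x t.castSucc h' k)))
            ≤ s j (∑ k, w j k * x t.castSucc j k)} := by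
        refine ⟨zero_le_one, le_refl 1, fun j _ => ?_⟩
        rw [one_mul]
        calc (∑ k, ∑ h', R t h' j k *
              (α t h' k * ((v h' k / L h') * x t.castSucc h' k)))
            = ∑ k, ∑ h', f t h' j k := by
              refine Finset.sum_congr rfl fun k _ => Finset.sum_congr rfl fun h' _ => ?_
              rw [hkey t h' k]
              exact (hf t h' j k).symm
          _ ≤ s j (∑ k, w j k * x t.castSucc j k) := hsup t j
      exact le_antisymm (le_csSup ⟨1, fun g hg => hg.2.1⟩ h1mem)
        (csSup_le ⟨1, h1mem⟩ fun g hg => hg.2.1)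
    · intro t i k
      simp only [one_mul]
      exact (hkey t i k).symm
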